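/- arXiv:1608.00157 — 7 statements merged into one kernel-verified Lean document; each statement's English description precedes it below -/
import Mathlib

section
/- Let z = x + iy be a complex number with x ≥ 5/4, and let k ≥ 1 be a natural number. Then |1 + z + z² + ⋯ + z^k|² > |z|^{2(k−1)} · (|z|² + 2x − 1). -/
open Complex Finset

/-- If `z = x + iy` with `x ≥ 5/4` and `k ≥ 1`, then
`|1 + z + ⋯ + z^k|² > |z|^{2(k-1)} · (|z|² + 2x − 1)`. -/
theorem norm_geom_sum_gt (z : ℂ) (hx : (5 : ℝ) / 4 ≤ z.re) (k : ℕ) (hk : 1 ≤ k) :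
    ‖∑ j ∈ Finset.range (k + 1), z ^ j‖ ^ 2 >
      ‖z‖ ^ (2 * (k - 1)) * (‖z‖ ^ 2 + 2 * z.re - 1) := by
  obtain ⟨m, rfl⟩ : ∃ m, k = m + 1 := ⟨k - 1, (Nat.succ_pred_eq_of_pos hk).symm⟩
  simp only [Nat.add_sub_cancel]
  set x := z.re with hxdef
  set y := z.im with hydef
  set r := ‖z‖ with hrdef
  have hr2 : r ^ 2 = x ^ 2 + y ^ 2 := by
    rw [hrdef, Complex.sq_norm, Complex.normSq_apply]; ring
  have hxr : x ≤ r := Complex.re_le_norm z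
  have hr0 : (0:ℝ) < r := lt_of_lt_of_le (by norm_num) (le_trans hx hxr)
  -- key inequality
  have key : 2 * (z ^ (m + 2)).re < r ^ (2 * m) * (2 * x - 1) ^ 2 + 1 := by
    match m with
    | 0 =>
      have h2 : (z ^ 2).re = x * x - y * y := by
        rw [pow_two, Complex.mul_re]
      rw [h2]
      norm_num
      nlinarith [sq_nonneg y, sq_nonneg (x - 1)]
    | 1 =>
      have h3 : (z ^ 3).re = x * x * x - 3 * (x * y * y) := by
        have : z ^ 3 = z * z * z := by ring
        rw [this, Complex.mul_re, Complex.mul_re, Complex.mul_im]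
        ring
      rw [h3]
      norm_num
      rw [hr2]
      nlinarith [sq_nonneg y, sq_nonneg (x * y), sq_nonneg (x - 5/4),
        mul_nonneg (mul_nonneg (le_trans (by norm_num) hx) (sub_nonneg.2 hx))
          (sub_nonneg.2 hx), sq_nonneg (x * (x - 5/4))]
    | (n + 2) =>
      have hre : (z ^ (n + 4)).re ≤ r ^ (n + 4) := by
        calc (z ^ (n + 4)).re ≤ ‖z ^ (n + 4)‖ := Complex.re_le_norm _
          _ = r ^ (n + 4) := by rw [norm_pow]
      have h1r : (1:ℝ) ≤ r := le_trans (by norm_num) (le_trans hx hxr)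
      have hpow : r ^ (n + 4) ≤ r ^ (2 * (n + 2)) :=
        pow_le_pow_right₀ h1r (by omega)
      have hb : (9:ℝ)/4 ≤ (2 * x - 1) ^ 2 := by nlinarith
      have hp0 : (1:ℝ) ≤ r ^ (n + 4) := one_le_pow₀ h1r
      have hmm : r ^ (n + 4) * (9/4) ≤ r ^ (2 * (n + 2)) * (2 * x - 1) ^ 2 :=
        mul_le_mul hpow hb (by norm_num) (pow_nonneg hr0.le _)
      have : (z ^ (n + 2 + 2)).re ≤ r ^ (n + 4) := by
        convert hre using 3
      nlinarith
  -- reduce using geometric sum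
  have hd : (0:ℝ) < ‖z - 1‖ ^ 2 := by
    have hne : z - 1 ≠ 0 := by
      intro h
      have : z = 1 := sub_eq_zero.mp h
      rw [this] at hxdef
      simp at hxdef
      rw [hxdef] at hx; norm_num at hx
    have := norm_pos_iff.mpr hne
    positivity
  have hgs : (∑ j ∈ Finset.range (m + 1 + 1), z ^ j) * (z - 1) = z ^ (m + 2) - 1 :=
    geom_sum_mul z (m + 2)
  have habs : ‖∑ j ∈ Finset.range (m + 1 + 1), z ^ j‖ ^ 2
      * ‖z - 1‖ ^ 2 = ‖z ^ (m + 2) - 1‖ ^ 2 := by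
    rw [← mul_pow, ← norm_mul, hgs]
  have hA : (z ^ (m + 2)).re * (z ^ (m + 2)).re + (z ^ (m + 2)).im * (z ^ (m + 2)).im
      = r ^ (2 * (m + 2)) := by
    have h1 : ‖z ^ (m + 2)‖ ^ 2 = r ^ (2 * (m + 2)) := by
      rw [norm_pow, ← pow_mul, Nat.mul_comm]
    rw [← h1, Complex.sq_norm, Complex.normSq_apply]
  have hnum : ‖z ^ (m + 2) - 1‖ ^ 2
      = r ^ (2 * (m + 2)) - 2 * (z ^ (m + 2)).re + 1 := by
    rw [Complex.sq_norm, Complex.normSq_sub]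
    simp [Complex.normSq_apply, Complex.mul_re]
    linarith [hA]
  have hden : ‖z - 1‖ ^ 2 = r ^ 2 - 2 * x + 1 := by
    rw [Complex.sq_norm, Complex.normSq_sub]
    simp [Complex.normSq_apply, Complex.mul_re, ← hxdef, ← hydef]
    rw [hr2]; ring
  rw [gt_iff_lt, ← mul_lt_mul_iff_of_pos_right hd, habs, hnum, hden]
  have expand : r ^ (2 * m) * (r ^ 2 + 2 * x - 1) * (r ^ 2 - 2 * x + 1)
      = r ^ (2 * (m + 2)) - r ^ (2 * m) * (2 * x - 1) ^ 2 := by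
    have h4 : r ^ (2 * (m + 2)) = r ^ (2 * m) * r ^ 4 := by
      rw [← pow_add]; ring_nf
    rw [h4]; ring
  rw [expand]
  linarith [key]
end

section
/- Let z = x + iy be a complex number with x ≥ 5/4 and |y| ≤ x − 1, and let k ≥ 1 be a natural number. Then |1 + z + z² + ⋯ + z^k|² ≥ |z|^{2(k−1)} · (|z|² + 2x + 1), with equality if and only if k = 1. -/
open Complex Finset

lemma key_strict (z : ℂ) (hx : (5 : ℝ) / 4 ≤ z.re) (hy : |z.im| ≤ z.re - 1)
    (k : ℕ) (hk : 2 ≤ k) :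
    ‖z‖ ^ (2 * (k - 1)) * ‖z ^ 2 - 1‖ ^ 2 <
      ‖z ^ (k + 1) - 1‖ ^ 2 := by
  set x := z.re with hxdef
  set y := z.im with hydef
  obtain ⟨hy1, hy2⟩ := abs_le.mp hy
  have hysq : y ^ 2 ≤ (x - 1) ^ 2 := by nlinarith
  have hn : Complex.normSq z = x ^ 2 + y ^ 2 := by rw [Complex.normSq_apply]; ring
  have h1 : ‖z ^ (k + 1) - 1‖ ^ 2
      = Complex.normSq z ^ (k + 1) - 2 * (z ^ (k + 1)).re + 1 := by
    rw [Complex.sq_norm, Complex.normSq_sub, ← map_pow]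
    simp
    ring
  have h2 : ‖z ^ 2 - 1‖ ^ 2
      = Complex.normSq z ^ 2 - 2 * (z ^ 2).re + 1 := by
    rw [Complex.sq_norm, Complex.normSq_sub, ← map_pow]
    simp
    ring
  have h3 : ‖z‖ ^ (2 * (k - 1)) = Complex.normSq z ^ (k - 1) := by
    rw [pow_mul, Complex.sq_norm]
  have hz2re : (z ^ 2).re = x ^ 2 - y ^ 2 := by
    rw [sq, Complex.mul_re]; ring
  rw [h1, h2, h3, hz2re]
  set n := Complex.normSq z with hndef
  obtain rfl | hk3 : k = 2 ∨ 3 ≤ k := by omega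
  · -- k = 2
    have hz3re : (z ^ 3).re = x ^ 3 - 3 * x * y ^ 2 := by
      have : z ^ 3 = z * z * z := by ring
      rw [this]
      simp [Complex.mul_re, Complex.mul_im]
      ring
    norm_num [hz3re, hn]
    nlinarith [sq_nonneg y, mul_nonneg (mul_nonneg (sq_nonneg y) (sub_nonneg.2 hysq)) (sq_nonneg (x-1)), sq_nonneg (x-1), sq_nonneg x]
  · -- k ≥ 3
    have hn1 : (25:ℝ)/16 ≤ n := by rw [hn]; nlinarith
    have hA : n ^ 2 - 2 * (x ^ 2 - y ^ 2) + 1 ≤ n ^ 2 - 2 := by nlinarith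
    have hpos : (0:ℝ) ≤ n ^ (k - 1) := by positivity
    have hmul : n ^ (k - 1) * (n ^ 2 - 2 * (x ^ 2 - y ^ 2) + 1) ≤ n ^ (k - 1) * (n ^ 2 - 2) :=
      mul_le_mul_of_nonneg_left hA hpos
    have hpowid : n ^ (k - 1) * n ^ 2 = n ^ (k + 1) := by
      rw [← pow_add]; congr 1; omega
    have habs1 : (1:ℝ) ≤ ‖z‖ := by
      have h := Complex.abs_re_le_norm z
      have := le_abs_self x
      linarith
    have hre : (z ^ (k + 1)).re ≤ ‖z‖ ^ (k + 1) := by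
      calc (z ^ (k + 1)).re ≤ ‖z ^ (k + 1)‖ := Complex.re_le_norm _
        _ = ‖z‖ ^ (k + 1) := norm_pow _ _
    have hpow : ‖z‖ ^ (k + 1) ≤ n ^ (k - 1) := by
      calc ‖z‖ ^ (k + 1) ≤ ‖z‖ ^ (2 * (k - 1)) :=
            pow_le_pow_right₀ habs1 (by omega)
        _ = n ^ (k - 1) := by rw [pow_mul, Complex.sq_norm]
    nlinarith

/-- If `z = x + iy` with `x ≥ 5/4`, `|y| ≤ x − 1`, and `k ≥ 1`, then
`|1 + z + ⋯ + z^k|² ≥ |z|^{2(k-1)} · (|z|² + 2x + 1)`, with equality iff `k = 1`. -/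
theorem norm_geom_sum_ge (z : ℂ) (hx : (5 : ℝ) / 4 ≤ z.re) (hy : |z.im| ≤ z.re - 1)
    (k : ℕ) (hk : 1 ≤ k) :
    ‖∑ j ∈ Finset.range (k + 1), z ^ j‖ ^ 2 ≥
      ‖z‖ ^ (2 * (k - 1)) * (‖z‖ ^ 2 + 2 * z.re + 1) ∧
    (‖∑ j ∈ Finset.range (k + 1), z ^ j‖ ^ 2 =
      ‖z‖ ^ (2 * (k - 1)) * (‖z‖ ^ 2 + 2 * z.re + 1) ↔ k = 1) := by
  have hplus : ‖z‖ ^ 2 + 2 * z.re + 1 = ‖1 + z‖ ^ 2 := by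
    rw [Complex.sq_norm, Complex.sq_norm, Complex.normSq_apply, Complex.normSq_apply]
    simp
    ring
  obtain rfl | hk2 : k = 1 ∨ 2 ≤ k := by omega
  · -- k = 1 : equality
    have hsum : ∑ j ∈ Finset.range 2, z ^ j = 1 + z := by
      simp [Finset.sum_range_succ]
    rw [hsum]
    norm_num [hplus]
  · -- k ≥ 2 : strict
    have hzne : z ≠ 1 := by
      intro h
      rw [h] at hx
      norm_num at hx
    have hzsub : z - 1 ≠ 0 := sub_ne_zero.mpr hzne
    have hb : 0 < ‖z - 1‖ := by
      simpa [norm_pos_iff] using hzsub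
    have hsum : ∑ j ∈ Finset.range (k + 1), z ^ j = (z ^ (k + 1) - 1) / (z - 1) :=
      geom_sum_eq hzne (k + 1)
    have habs : ‖∑ j ∈ Finset.range (k + 1), z ^ j‖
        = ‖z ^ (k + 1) - 1‖ / ‖z - 1‖ := by
      rw [hsum, norm_div]
    have hfac : ‖1 + z‖ * ‖z - 1‖ = ‖z ^ 2 - 1‖ := by
      rw [← norm_mul]
      congr 1
      ring
    have hstrict : ‖z‖ ^ (2 * (k - 1)) * (‖z‖ ^ 2 + 2 * z.re + 1) <
        ‖∑ j ∈ Finset.range (k + 1), z ^ j‖ ^ 2 := by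
      rw [habs, hplus, div_pow, lt_div_iff₀ (by positivity)]
      calc ‖z‖ ^ (2 * (k - 1)) * ‖1 + z‖ ^ 2 * ‖z - 1‖ ^ 2
          = ‖z‖ ^ (2 * (k - 1)) * (‖1 + z‖ * ‖z - 1‖) ^ 2 := by
            ring
        _ = ‖z‖ ^ (2 * (k - 1)) * ‖z ^ 2 - 1‖ ^ 2 := by rw [hfac]
        _ < ‖z ^ (k + 1) - 1‖ ^ 2 := key_strict z hx hy k hk2
    refine ⟨le_of_lt hstrict, ?_, fun h => absurd h (by omega)⟩
    intro h
    exact absurd h.symm (ne_of_lt hstrict)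
end

section
/- Let τ = ω + 2 in the ring of Eisenstein integers ℤ[ω]. For all natural numbers n ≥ 1 and m ≥ 2, the geometric sum 1 + τⁿ + τ^{2n} + ⋯ + τ^{(m−1)n} = (τ^{nm} − 1)/(τⁿ − 1) is not a unit of ℤ[ω]. -/
open Complex Finset

/-- The primitive cube root of unity `ω = e^{2πi/3}`. -/
noncomputable def ω : ℂ := Complex.exp (2 * Real.pi * Complex.I / 3)

/-- The ring of Eisenstein integers `ℤ[ω]`, realized as the subring of `ℂ` generated by `ω`. -/
noncomputable def Eisen : Subring ℂ := Subring.closure {ω}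

/-- `ω` as an Eisenstein integer. -/
noncomputable def ωE : Eisen := ⟨ω, Subring.subset_closure (Set.mem_singleton ω)⟩

/-- `τ = ω + 2` as an Eisenstein integer. -/
noncomputable def τE : Eisen := ωE + 2

lemma omega_re : ω.re = -(1/2) := by
  have h : (2 * Real.pi * Complex.I / 3) = ((2 * Real.pi / 3 : ℝ) : ℂ) * Complex.I := by
    push_cast; ring
  rw [ω, h, Complex.exp_ofReal_mul_I_re]
  rw [show (2 * Real.pi / 3 : ℝ) = Real.pi - Real.pi/3 by ring, Real.cos_pi_sub,
    Real.cos_pi_div_three]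

lemma omega_im : ω.im = Real.sqrt 3 / 2 := by
  have h : (2 * Real.pi * Complex.I / 3) = ((2 * Real.pi / 3 : ℝ) : ℂ) * Complex.I := by
    push_cast; ring
  rw [ω, h, Complex.exp_ofReal_mul_I_im]
  rw [show (2 * Real.pi / 3 : ℝ) = Real.pi - Real.pi/3 by ring, Real.sin_pi_sub,
    Real.sin_pi_div_three]

lemma sqrt3_sq : Real.sqrt 3 ^ 2 = 3 := Real.sq_sqrt (by norm_num)

lemma omega_sq : ω ^ 2 = -1 - ω := by
  have h3 := sqrt3_sq
  apply Complex.ext <;>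
    simp [pow_two, Complex.mul_re, Complex.mul_im, omega_re, omega_im] <;> nlinarith

lemma mem_eisen (z : ℂ) (hz : z ∈ Eisen) : ∃ a b : ℤ, z = a + b * ω := by
  induction hz using Subring.closure_induction with
  | mem x hx => exact ⟨0, 1, by simp [Set.mem_singleton_iff.mp hx]⟩
  | zero => exact ⟨0, 0, by simp⟩
  | one => exact ⟨1, 0, by simp⟩
  | add x y hx hy ihx ihy =>
    obtain ⟨a, b, rfl⟩ := ihx; obtain ⟨c, d, rfl⟩ := ihy
    exact ⟨a + c, b + d, by push_cast; ring⟩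
  | neg x hx ih =>
    obtain ⟨a, b, rfl⟩ := ih
    exact ⟨-a, -b, by push_cast; ring⟩
  | mul x y hx hy ihx ihy =>
    obtain ⟨a, b, rfl⟩ := ihx; obtain ⟨c, d, rfl⟩ := ihy
    refine ⟨a * c - b * d, a * d + b * c - b * d, ?_⟩
    have h : ((a:ℂ) + b * ω) * (c + d * ω) = a*c + (a*d + b*c)*ω + (b*d) * ω^2 := by ring
    rw [h, omega_sq]; push_cast; ring

lemma normSq_int (a b : ℤ) : Complex.normSq ((a : ℂ) + b * ω) = ((a^2 - a*b + b^2 : ℤ) : ℝ) := by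
  have h3 := sqrt3_sq
  simp [Complex.normSq_apply, Complex.add_re, Complex.add_im, Complex.mul_re, Complex.mul_im,
    omega_re, omega_im]
  nlinarith

lemma eisen_one_le (z : ℂ) (hz : z ∈ Eisen) (h0 : z ≠ 0) : 1 ≤ ‖z‖ := by
  obtain ⟨a, b, rfl⟩ := mem_eisen z hz
  have h1 : Complex.normSq ((a:ℂ) + b*ω) ≠ 0 := (Complex.normSq_pos.mpr h0).ne'
  rw [normSq_int] at h1
  have h1' : (a^2 - a*b + b^2 : ℤ) ≠ 0 := by exact_mod_cast h1
  have h2 : (0:ℝ) ≤ ((a^2 - a*b + b^2 : ℤ) : ℝ) := by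
    rw [← normSq_int]; exact Complex.normSq_nonneg _
  have h2' : (0:ℤ) ≤ a^2 - a*b + b^2 := by exact_mod_cast h2
  have h4 : (1:ℤ) ≤ a^2 - a*b + b^2 := by omega
  have h5 : (1:ℝ) ≤ Complex.normSq ((a:ℂ) + b*ω) := by
    rw [normSq_int]; exact_mod_cast h4
  have h6 := Complex.sq_norm ((a:ℂ) + b*ω)
  nlinarith [norm_nonneg ((a:ℂ) + b*ω)]

lemma tau_coe : ((τE : Eisen) : ℂ) = ω + 2 := by
  have h : (τE : Eisen) = ωE + 2 := rfl
  rw [h]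
  push_cast
  rw [show ((2 : Eisen) : ℂ) = 2 from map_ofNat Eisen.subtype 2]
  norm_num [ωE]

lemma abs_tau : ‖ω + 2‖ = Real.sqrt 3 := by
  have h : Complex.normSq (ω + 2) = 3 := by
    have := normSq_int 2 1
    rw [show ((2:ℤ):ℂ) + ((1:ℤ):ℂ) * ω = ω + 2 by push_cast; ring] at this
    rw [this]; norm_num
  rw [Complex.norm_def, h]

lemma one_le_sqrt3 : (1:ℝ) ≤ Real.sqrt 3 := by
  nlinarith [sqrt3_sq, Real.sqrt_nonneg 3]

/-- For `n ≥ 1` and `m ≥ 2`, the geometric sum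
`1 + τⁿ + τ^{2n} + ⋯ + τ^{(m−1)n}` is not a unit of `ℤ[ω]`. -/
theorem geom_sum_not_unit (n m : ℕ) (hn : 1 ≤ n) (hm : 2 ≤ m) :
    ¬ IsUnit (∑ j ∈ Finset.range m, (τE ^ n) ^ j) := by
  intro hu
  set S : Eisen := ∑ j ∈ Finset.range m, (τE ^ n) ^ j with hSdef
  obtain ⟨T, hT⟩ := isUnit_iff_exists_inv.mp hu
  have hTC : (S:ℂ) * (T:ℂ) = 1 := by exact_mod_cast congrArg Subtype.val hT
  have hT0 : (T:ℂ) ≠ 0 := by intro h; rw [h, mul_zero] at hTC; exact zero_ne_one hTC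
  have hT1 : 1 ≤ ‖(T:ℂ)‖ := eisen_one_le _ T.2 hT0
  have habsS : ‖(S:ℂ)‖ ≤ 1 := by
    have hmul : ‖(S:ℂ)‖ * ‖(T:ℂ)‖ = 1 := by
      rw [← norm_mul, hTC, norm_one]
    nlinarith [norm_nonneg (S:ℂ)]
  set x : ℂ := ((ω:ℂ) + 2) ^ n with hxdef
  have hcoe : (S:ℂ) = ∑ j ∈ Finset.range m, x ^ j := by
    rw [hSdef]
    push_cast [tau_coe]
    rfl
  have hgeo : (S:ℂ) * (x - 1) = x ^ m - 1 := by rw [hcoe]; exact geom_sum_mul x m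
  set a : ℝ := Real.sqrt 3 ^ n with hadef
  have hax : ‖x‖ = a := by rw [hxdef, norm_pow, abs_tau]
  have ha0 : (0:ℝ) ≤ a := pow_nonneg (Real.sqrt_nonneg 3) n
  -- key bound : a^m - 1 ≤ |x - 1|
  have e1 : ‖(S:ℂ)‖ * ‖x - 1‖ = ‖x ^ m - 1‖ := by
    rw [← norm_mul, hgeo]
  have e2 : a ^ m - 1 ≤ ‖x ^ m - 1‖ := by
    have h := norm_add_le (x ^ m - 1) 1
    rw [sub_add_cancel, norm_one, norm_pow, hax] at h
    linarith
  have key : a ^ m - 1 ≤ ‖x - 1‖ := by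
    have hx1 : (0:ℝ) ≤ ‖x - 1‖ := norm_nonneg _
    nlinarith
  rcases eq_or_lt_of_le hn with hn1 | hn2
  · -- n = 1 : |τ - 1| = |ω + 1| = 1
    have hx : x = ω + 2 := by rw [hxdef, ← hn1, pow_one]
    have habs1 : ‖x - 1‖ = 1 := by
      have h := normSq_int 1 1
      rw [show ((1:ℤ):ℂ) + ((1:ℤ):ℂ) * ω = x - 1 by rw [hx]; push_cast; ring] at h
      rw [Complex.norm_def, h]
      norm_num
    have hge : (3:ℝ) ≤ a ^ m := by
      have : Real.sqrt 3 ^ 2 ≤ Real.sqrt 3 ^ m := pow_le_pow_right₀ one_le_sqrt3 hm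
      rw [sqrt3_sq] at this
      calc (3:ℝ) ≤ Real.sqrt 3 ^ m := this
        _ = a ^ m := by rw [hadef, ← hn1, pow_one]
    rw [habs1] at key
    linarith
  · -- n ≥ 2 : a ≥ 3
    have hage : (3:ℝ) ≤ a := by
      have : Real.sqrt 3 ^ 2 ≤ Real.sqrt 3 ^ n := pow_le_pow_right₀ one_le_sqrt3 hn2
      rwa [sqrt3_sq] at this
    have hub : ‖x - 1‖ ≤ a + 1 := by
      have h := norm_sub_le_norm_sub_add_norm_sub x 0 1
      simp only [sub_zero, map_one] at h
      calc ‖x - 1‖ ≤ ‖x‖ + ‖(0:ℂ) - 1‖ := h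
        _ = a + 1 := by rw [hax]; norm_num
    have hm2 : a ^ 2 ≤ a ^ m := pow_le_pow_right₀ (by linarith) hm
    nlinarith
end

section
/- Let ω = e^{2πi/3} ∈ ℂ and τ = ω + 2. For every natural number k ≥ 3 whose residue modulo 12 lies in {3, 4, 5, 6, 7, 8, 9}, one has |τ^k − 1|² > 3^k. -/
open Complex

noncomputable def τ : ℂ := ω + 2

lemma tau_eq : τ = (Real.sqrt 3 : ℂ) * Complex.exp ((Real.pi / 6 : ℝ) * Complex.I) := by
  have h1 : (2 * Real.pi * Complex.I / 3) = ((2 * Real.pi / 3 : ℝ) : ℂ) * Complex.I := by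
    push_cast; ring
  have h2 : Real.cos (2 * Real.pi / 3) = -(1/2) := by
    have : (2 : ℝ) * Real.pi / 3 = Real.pi - Real.pi / 3 := by ring
    rw [this, Real.cos_pi_sub, Real.cos_pi_div_three]
  have h3 : Real.sin (2 * Real.pi / 3) = Real.sqrt 3 / 2 := by
    have : (2 : ℝ) * Real.pi / 3 = Real.pi - Real.pi / 3 := by ring
    rw [this, Real.sin_pi_sub, Real.sin_pi_div_three]
  have hs : Real.sqrt 3 * Real.sqrt 3 = 3 := Real.mul_self_sqrt (by norm_num)
  unfold τ ω
  rw [h1, Complex.exp_mul_I, Complex.exp_mul_I, ← Complex.ofReal_cos, ← Complex.ofReal_sin,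
    ← Complex.ofReal_cos, ← Complex.ofReal_sin, h2, h3, Real.cos_pi_div_six, Real.sin_pi_div_six]
  apply Complex.ext <;> simp <;> nlinarith [hs]

lemma normSq_tau : Complex.normSq τ = 3 := by
  rw [tau_eq, map_mul, Complex.normSq_ofReal, Real.mul_self_sqrt (by norm_num : (0:ℝ) ≤ 3),
    Complex.normSq_eq_norm_sq, Complex.norm_exp_ofReal_mul_I]
  norm_num

/-- For `k ≥ 3` with `k mod 12 ∈ {3,4,5,6,7,8,9}`, one has
`|τ^k − 1|² > 3^k`. -/
theorem normSq_tau_pow_sub_one_gt (k : ℕ) (hk : 3 ≤ k)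
    (hmod : k % 12 ∈ ({3, 4, 5, 6, 7, 8, 9} : Finset ℕ)) :
    ‖τ ^ k - 1‖ ^ 2 > (3 : ℝ) ^ k := by
  have hpow : τ ^ k = ((Real.sqrt 3 ^ k : ℝ) : ℂ) * Complex.exp (((k * Real.pi / 6 : ℝ) : ℂ) * Complex.I) := by
    rw [tau_eq, mul_pow, ← Complex.exp_nat_mul]
    congr 2
    · push_cast; ring
    · push_cast; ring
  have hre : (τ ^ k).re = Real.sqrt 3 ^ k * Real.cos ((k : ℝ) * Real.pi / 6) := by
    have key : ∀ a θ : ℝ, (((a : ℝ) : ℂ) * Complex.exp ((θ : ℂ) * Complex.I)).re = a * Real.cos θ := by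
      intro a θ
      simp [Complex.mul_re, Complex.exp_ofReal_mul_I_re, Complex.exp_ofReal_mul_I_im]
    rw [hpow, key]
  have hrb : 3 ≤ k % 12 ∧ k % 12 ≤ 9 := by
    simp only [Finset.mem_insert, Finset.mem_singleton] at hmod; omega
  have hcos : Real.cos ((k : ℝ) * Real.pi / 6) ≤ 0 := by
    have heq : (k : ℝ) * Real.pi / 6 =
        ((k % 12 : ℕ) : ℝ) * Real.pi / 6 + (k / 12 : ℕ) * (2 * Real.pi) := by
      have h : (k : ℝ) = 12 * ((k / 12 : ℕ) : ℝ) + ((k % 12 : ℕ) : ℝ) := by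
        exact_mod_cast (Nat.div_add_mod k 12).symm
      rw [h]; ring
    rw [heq, Real.cos_add_nat_mul_two_pi]
    have h3 : (3 : ℝ) ≤ ((k % 12 : ℕ) : ℝ) := by exact_mod_cast hrb.1
    have h9 : ((k % 12 : ℕ) : ℝ) ≤ 9 := by exact_mod_cast hrb.2
    apply Real.cos_nonpos_of_pi_div_two_le_of_le <;> nlinarith [Real.pi_pos]
  have habs : ‖τ ^ k - 1‖ ^ 2 = Complex.normSq (τ ^ k - 1) := Complex.sq_norm _
  have hns : Complex.normSq (τ ^ k - 1) = 3 ^ k - 2 * (τ ^ k).re + 1 := by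
    rw [Complex.normSq_sub]
    simp [map_pow, normSq_tau]
    ring
  rw [habs, hns]
  have hrle : (τ ^ k).re ≤ 0 := by
    rw [hre]
    exact mul_nonpos_of_nonneg_of_nonpos (pow_nonneg (Real.sqrt_nonneg 3) k) hcos
  linarith
end

section
/- Let ω = e^{2πi/3} ∈ ℂ and τ = ω + 2. For every natural number k with k ≡ 1 (mod 12) or k ≡ 11 (mod 12), one has |τ^k − 1|² = 1 + 3^k − 3^{(k+1)/2}. -/
open Complex

lemma omega_explicit : ω = -1/2 + ((Real.sqrt 3 : ℝ) : ℂ) / 2 * Complex.I := by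
  have h : (2 * Real.pi * Complex.I / 3) = ((2 * Real.pi / 3 : ℝ) : ℂ) * Complex.I := by
    push_cast; ring
  have hc : Real.cos (2 * Real.pi / 3) = -(1/2) := by
    have : (2 * Real.pi / 3) = Real.pi - Real.pi / 3 := by ring
    rw [this, Real.cos_pi_sub, Real.cos_pi_div_three]
  have hs : Real.sin (2 * Real.pi / 3) = Real.sqrt 3 / 2 := by
    have : (2 * Real.pi / 3) = Real.pi - Real.pi / 3 := by ring
    rw [this, Real.sin_pi_sub, Real.sin_pi_div_three]
  rw [ω, h, Complex.exp_mul_I, ← Complex.ofReal_cos, ← Complex.ofReal_sin, hc, hs]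
  push_cast
  ring

lemma tau_sq : τ ^ 2 = 3 * τ - 3 := by
  have hs : ((Real.sqrt 3 : ℝ) : ℂ) ^ 2 = 3 := by
    rw [← Complex.ofReal_pow, Real.sq_sqrt (by norm_num : (3:ℝ) ≥ 0)]
    norm_num
  rw [τ, omega_explicit]
  linear_combination (Complex.I ^ 2 / 4) * hs + (3/4) * Complex.I_sq

lemma tau_conj : (starRingEnd ℂ) τ = 3 - τ := by
  rw [τ, omega_explicit]
  simp [map_add, map_mul, map_div₀, map_ofNat, Complex.conj_I, Complex.conj_ofReal]
  ring

lemma tau_mul_conj : τ * (starRingEnd ℂ) τ = 3 := by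
  rw [tau_conj]
  linear_combination -tau_sq

lemma tau_pow_twelve : τ ^ 12 = 729 := by
  linear_combination (τ^10 + 3*τ^9 + 6*τ^8 + 9*τ^7 + 9*τ^6 - 27*τ^4 - 81*τ^3 -
    162*τ^2 - 243*τ - 243) * tau_sq

lemma tau_pow_eleven : τ ^ 11 = -243 * τ + 729 := by
  linear_combination (τ^9 + 3*τ^8 + 6*τ^7 + 9*τ^6 + 9*τ^5 - 27*τ^3 - 81*τ^2 -
    162*τ - 243) * tau_sq

/-- For `k ≡ ±1 (mod 12)`, one has `|τ^k − 1|² = 1 + 3^k − 3^{(k+1)/2}`. -/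
theorem normSq_tau_pow_sub_one_of_one_or_eleven (k : ℕ)
    (hmod : k % 12 = 1 ∨ k % 12 = 11) :
    ‖τ ^ k - 1‖ ^ 2 = 1 + (3 : ℝ) ^ k - (3 : ℝ) ^ ((k + 1) / 2) := by
  apply Complex.ofReal_injective
  push_cast
  rw [← Complex.ofReal_pow, Complex.sq_norm, ← Complex.mul_conj]
  rw [map_sub, map_one, map_pow, tau_conj]
  have hmc := tau_mul_conj
  rw [tau_conj] at hmc
  rcases hmod with h | h
  · obtain ⟨m, rfl⟩ : ∃ m, k = 12 * m + 1 := ⟨k / 12, by omega⟩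
    have he : (12 * m + 1 + 1) / 2 = 6 * m + 1 := by omega
    rw [he]; simp only [pow_add, pow_mul]; rw [tau_pow_twelve]
    have h12 : ((3 - τ) ^ 12 : ℂ) = 729 := by
      linear_combination ((3-τ)^10 + 3*(3-τ)^9 + 6*(3-τ)^8 + 9*(3-τ)^7 + 9*(3-τ)^6
        - 27*(3-τ)^4 - 81*(3-τ)^3 - 162*(3-τ)^2 - 243*(3-τ) - 243) *
        (by linear_combination tau_sq : (3 - τ)^2 = 3 * (3 - τ) - 3)
    rw [h12]
    have h3 : ((3:ℂ)^12) = 729^2 := by norm_num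
    have h6 : ((3:ℂ)^6) = 729 := by norm_num
    rw [h3, h6, show (((729:ℂ)^2)^m) = (729^m)^2 by rw [← pow_mul, ← pow_mul, Nat.mul_comm]]
    set A : ℂ := (729:ℂ)^m
    linear_combination A^2 * hmc
  · obtain ⟨m, rfl⟩ : ∃ m, k = 12 * m + 11 := ⟨k / 12, by omega⟩
    have he : (12 * m + 11 + 1) / 2 = 6 * m + 6 := by omega
    rw [he]; simp only [pow_add, pow_mul]; rw [tau_pow_twelve]
    have h12 : ((3 - τ) ^ 12 : ℂ) = 729 := by
      linear_combination ((3-τ)^10 + 3*(3-τ)^9 + 6*(3-τ)^8 + 9*(3-τ)^7 + 9*(3-τ)^6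
        - 27*(3-τ)^4 - 81*(3-τ)^3 - 162*(3-τ)^2 - 243*(3-τ) - 243) *
        (by linear_combination tau_sq : (3 - τ)^2 = 3 * (3 - τ) - 3)
    have h11 : ((3 - τ) ^ 11 : ℂ) = -243 * (3 - τ) + 729 := by
      linear_combination ((3-τ)^9 + 3*(3-τ)^8 + 6*(3-τ)^7 + 9*(3-τ)^6 + 9*(3-τ)^5
        - 27*(3-τ)^3 - 81*(3-τ)^2 - 162*(3-τ) - 243) *
        (by linear_combination tau_sq : (3 - τ)^2 = 3 * (3 - τ) - 3)
    rw [h12, h11, tau_pow_eleven]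
    have h3 : ((3:ℂ)^12) = 729^2 := by norm_num
    have h6 : ((3:ℂ)^6) = 729 := by norm_num
    have h311 : ((3:ℂ)^11) = 177147 := by norm_num
    rw [h3, h6, h311, show (((729:ℂ)^2)^m) = (729^m)^2 by rw [← pow_mul, ← pow_mul, Nat.mul_comm]]
    set A : ℂ := (729:ℂ)^m
    linear_combination 59049 * A^2 * hmc
end

section
/- Let ω = e^{2πi/3} ∈ ℂ and τ = ω + 2. For every natural number k with k ≡ 3 (mod 12) or k ≡ 9 (mod 12), one has |τ^k − 1|² = 1 + 3^k. -/
open Complex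

lemma tau_val : τ = 3/2 + (Real.sqrt 3 / 2 : ℝ) * Complex.I := by
  have h : (2 * Real.pi * Complex.I / 3) = ((2 * Real.pi / 3 : ℝ) : ℂ) * Complex.I := by
    push_cast; ring
  have hc : Real.cos (2 * Real.pi / 3) = -(1/2) := by
    have : (2 * Real.pi / 3) = Real.pi - Real.pi / 3 := by ring
    rw [this, Real.cos_pi_sub, Real.cos_pi_div_three]
  have hs : Real.sin (2 * Real.pi / 3) = Real.sqrt 3 / 2 := by
    have : (2 * Real.pi / 3) = Real.pi - Real.pi / 3 := by ring
    rw [this, Real.sin_pi_sub, Real.sin_pi_div_three]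
  rw [τ, ω, h, Complex.exp_mul_I, ← Complex.ofReal_cos, ← Complex.ofReal_sin, hc, hs]
  push_cast; ring

lemma tau_cube : τ ^ 3 = ((3 * Real.sqrt 3 : ℝ) : ℂ) * Complex.I := by
  have hs : ((Real.sqrt 3 : ℝ) : ℂ) ^ 2 = 3 := by
    rw [← Complex.ofReal_pow, Real.sq_sqrt (by norm_num : (3:ℝ) ≥ 0)]; norm_num
  have hI : Complex.I ^ 2 = -1 := Complex.I_sq
  rw [tau_val]
  push_cast
  linear_combination (9/8 * Complex.I^2 + (Real.sqrt 3:ℂ) * Complex.I^3/8) * hs +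
    (27/8 + 3*(Real.sqrt 3:ℂ)*Complex.I/8) * hI

lemma tau_six : τ ^ 6 = -27 := by
  have hs : ((Real.sqrt 3 : ℝ) : ℂ) ^ 2 = 3 := by
    rw [← Complex.ofReal_pow, Real.sq_sqrt (by norm_num : (3:ℝ) ≥ 0)]; norm_num
  have : τ ^ 6 = (τ ^ 3) ^ 2 := by ring
  rw [this, tau_cube]
  push_cast
  linear_combination (9 * Complex.I^2) * hs + 27 * Complex.I_sq

/-- For `k ≡ 3 (mod 12)` or `k ≡ 9 (mod 12)`,
one has `|τ^k − 1|² = 1 + 3^k`. -/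
theorem normSq_tau_pow_sub_one_of_three_or_nine (k : ℕ)
    (hmod : k % 12 = 3 ∨ k % 12 = 9) :
    ‖τ ^ k - 1‖ ^ 2 = 1 + (3 : ℝ) ^ k := by
  obtain ⟨m, hm⟩ : ∃ m, k = 6 * m + 3 := ⟨k / 6, by omega⟩
  set c : ℝ := (-27) ^ m * (3 * Real.sqrt 3) with hc
  have hτk : τ ^ k = (c : ℂ) * Complex.I := by
    rw [hm, pow_add, pow_mul, tau_six, tau_cube, hc]
    push_cast; ring
  rw [Complex.sq_norm, hτk]
  have h1 : Complex.normSq ((c : ℂ) * Complex.I - 1) = 1 + c ^ 2 := by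
    simp [Complex.normSq_apply]; ring
  rw [h1]
  have h3 : Real.sqrt 3 ^ 2 = 3 := Real.sq_sqrt (by norm_num)
  have hc2 : c ^ 2 = (3:ℝ) ^ k := by
    calc c ^ 2 = (((-27:ℝ)) ^ 2) ^ m * (9 * Real.sqrt 3 ^ 2) := by
          rw [hc, mul_pow, ← pow_mul, mul_comm m 2, pow_mul]; ring
    _ = (729 : ℝ) ^ m * 27 := by rw [h3]; norm_num
    _ = ((3:ℝ) ^ 6) ^ m * 3 ^ 3 := by norm_num
    _ = (3:ℝ) ^ k := by rw [← pow_mul, ← pow_add, hm]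
  rw [hc2]
end

section
/- Let ω = e^{2πi/3} ∈ ℂ, τ = ω + 2, and for k ≡ 1 (mod 12) with k > 1 let M_k = (τ^k − 1)/(τ − 1) ∈ ℂ. Then Re(M_k) = (−1 + 3^{(k+1)/2})/2 and Im(M_k) = (√3 − 3^{k/2})/2; consequently Re(M_k) > 0, Im(M_k) < 0, and the argument of M_k lies in the interval [−π/3, 0) (i.e., M_k lies in the sixth sextant of the plane). -/
open Complex

/-- The `τ`-Mersenne number `M_k = (τ^k − 1)/(τ − 1)` as a complex number. -/
noncomputable def M (k : ℕ) : ℂ := (τ ^ k - 1) / (τ - 1)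

set_option maxHeartbeats 1000000 in
/-- For `k ≡ 1 (mod 12)` with `k > 1`:
`Re M_k = (−1 + 3^{(k+1)/2})/2`, `Im M_k = (√3 − 3^{k/2})/2`, so `Re M_k > 0`,
`Im M_k < 0`, and `Arg M_k ∈ [−π/3, 0)` (`M_k` lies in the sixth sextant). -/
theorem mersenne_sixth_sextant (k : ℕ) (hmod : k % 12 = 1) (hk : 1 < k) :
    (M k).re = (-1 + (3 : ℝ) ^ (((k : ℝ) + 1) / 2)) / 2 ∧
    (M k).im = (Real.sqrt 3 - (3 : ℝ) ^ ((k : ℝ) / 2)) / 2 ∧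
    0 < (M k).re ∧ (M k).im < 0 ∧
    -(Real.pi / 3) ≤ (M k).arg ∧ (M k).arg < 0 := by
  -- basic facts about √3
  have h3 : Real.sqrt 3 * Real.sqrt 3 = 3 := Real.mul_self_sqrt (by norm_num)
  have h3pos : 0 < Real.sqrt 3 := Real.sqrt_pos.mpr (by norm_num)
  -- τ explicitly
  have hτre : τ.re = 3/2 ∧ τ.im = Real.sqrt 3 / 2 := by
    have h : (2 * Real.pi * Complex.I / 3) = ((2*Real.pi/3 : ℝ) : ℂ) * I := by
      push_cast; ring
    have hω : ω = Real.cos (2*Real.pi/3) + Real.sin (2*Real.pi/3) * I := by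
      rw [ω, h, Complex.exp_mul_I]; norm_cast
    have hc : Real.cos (2*Real.pi/3) = -(1/2) := by
      have : (2*Real.pi/3) = Real.pi - Real.pi/3 := by ring
      rw [this, Real.cos_pi_sub, Real.cos_pi_div_three]
    have hs : Real.sin (2*Real.pi/3) = Real.sqrt 3 / 2 := by
      have : (2*Real.pi/3) = Real.pi - Real.pi/3 := by ring
      rw [this, Real.sin_pi_sub, Real.sin_pi_div_three]
    constructor <;> simp [τ, hω, hc, hs] <;> norm_num
  obtain ⟨hre, him⟩ := hτre
  -- τ² = 3τ - 3 hence τ⁶ = -27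
  have hq : τ ^ 2 = 3 * τ - 3 := by
    apply Complex.ext <;>
      simp [pow_two, Complex.mul_re, Complex.mul_im, hre, him] <;> nlinarith [h3]
  have hτ6 : τ ^ 6 = -27 := by linear_combination (τ^4 + 3*τ^3 + 6*τ^2 + 9*τ + 9) * hq
  -- k = 12m+1
  obtain ⟨m, hm⟩ : ∃ m, k = 12 * m + 1 := ⟨k / 12, by omega⟩
  have hm1 : 1 ≤ m := by omega
  set c : ℝ := (729 : ℝ) ^ m with hc
  have hcpos : (0:ℝ) < c := by positivity
  have hcge : (729:ℝ) ≤ c := by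
    calc (729:ℝ) = 729 ^ 1 := by norm_num
    _ ≤ 729 ^ m := by exact pow_le_pow_right₀ (by norm_num) hm1
  -- τ^k = c * τ
  have hτk : τ ^ k = (c : ℂ) * τ := by
    rw [hm, pow_succ, show 12 * m = 6 * (2 * m) by ring, pow_mul, hτ6,
      show ((-27:ℂ))^(2*m) = ((729:ℂ))^m by rw [pow_mul]; norm_num]
    push_cast [hc]; ring
  -- real and imaginary parts of M k
  have hMre : (M k).re = (3 * c - 1) / 2 := by
    rw [M, Complex.div_re, hτk]
    simp [Complex.normSq_apply, Complex.mul_re, Complex.mul_im, hre, him]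
    field_simp
    ring_nf
    nlinarith [h3]
  have hMim : (M k).im = (Real.sqrt 3 - c * Real.sqrt 3) / 2 := by
    rw [M, Complex.div_im, hτk]
    simp [Complex.normSq_apply, Complex.mul_re, Complex.mul_im, hre, him]
    field_simp
    nlinarith [h3]
  -- rpow computations
  have he1 : (3:ℝ) ^ (((k : ℝ) + 1) / 2) = 3 * c := by
    have h1 : ((k : ℝ) + 1) / 2 = ((6*m+1 : ℕ) : ℝ) := by
      push_cast [hm]; ring
    rw [h1, Real.rpow_natCast, pow_succ', pow_mul]
    norm_num [hc]
  have he2 : (3:ℝ) ^ ((k : ℝ) / 2) = c * Real.sqrt 3 := by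
    have h1 : (k : ℝ) / 2 = ((6*m : ℕ) : ℝ) + (1/2 : ℝ) := by
      push_cast [hm]; ring
    rw [h1, Real.rpow_add (by norm_num), Real.rpow_natCast, pow_mul, ← Real.rpow_natCast,
      ← Real.sqrt_eq_rpow]
    norm_num [hc]
  have hRe : (M k).re = (-1 + (3 : ℝ) ^ (((k : ℝ) + 1) / 2)) / 2 := by
    rw [hMre, he1]; ring
  have hIm : (M k).im = (Real.sqrt 3 - (3 : ℝ) ^ ((k : ℝ) / 2)) / 2 := by
    rw [hMim, he2]
  have hRepos : 0 < (M k).re := by rw [hMre]; nlinarith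
  have hImneg : (M k).im < 0 := by rw [hMim]; nlinarith
  refine ⟨hRe, hIm, hRepos, hImneg, ?_, Complex.arg_neg_iff.mpr hImneg⟩
  -- arg lower bound
  have hargneg : (M k).arg < 0 := Complex.arg_neg_iff.mpr hImneg
  have hargge : -(Real.pi/2) < (M k).arg := by
    rcases lt_or_eq_of_le (Complex.neg_pi_div_two_le_arg_iff.mpr (Or.inl hRepos.le)) with h | h
    · exact h
    · exfalso
      have := Complex.arg_eq_neg_pi_div_two_iff.mp h.symm
      exact hRepos.ne' this.1
  have harg : (M k).arg = Real.arctan ((M k).im / (M k).re) := by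
    rw [← Complex.tan_arg, Real.arctan_tan hargge
      (lt_trans hargneg (by positivity))]
  have hpi3 : Real.pi / 3 = Real.arctan (Real.sqrt 3) := by
    rw [← Real.arctan_tan (x := Real.pi/3) (by linarith [Real.pi_pos])
      (by linarith [Real.pi_pos]), Real.tan_eq_sin_div_cos, Real.sin_pi_div_three,
      Real.cos_pi_div_three]
    norm_num
    congr 1
    rw [show Real.sqrt 3 / 2 / (1 / 2) = Real.sqrt 3 by ring, Real.arctan_sqrt_three]
  rw [harg, hpi3, ← Real.arctan_neg]
  apply Real.arctan_strictMono.monotone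
  rw [le_div_iff₀ hRepos]
  rw [hMre, hMim]
  nlinarith
end
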